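/- There exists a constant c > 0 such that for all real numbers t1, t2 and every integer n ≥ 2, the sum over j from 1 to n of (t1 + j·t2)² is at least c·(n·t1² + n³·t2²). -/

import Mathlib

open Finset

lemma sum_sq_closed (t1 t2 : ℝ) : ∀ n : ℕ,
    ∑ j ∈ Finset.Icc 1 n, (t1 + (j : ℝ) * t2) ^ 2
      = n * t1 ^ 2 + n * (n + 1) * t1 * t2 + n * (n + 1) * (2 * n + 1) / 6 * t2 ^ 2 := by
  intro n
  induction n with
  | zero => simp
  | succ m ih =>
    rw [Finset.sum_Icc_succ_top (by omega : 1 ≤ m + 1), ih]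
    push_cast
    ring

/-- There exists `c > 0` such that for all reals `t1, t2` and every integer `n ≥ 2`,
`∑_{j=1}^n (t1 + j t2)^2 ≥ c (n t1^2 + n^3 t2^2)`. -/
theorem sum_sq_lower_bound :
    ∃ c : ℝ, 0 < c ∧ ∀ (t1 t2 : ℝ) (n : ℕ), 2 ≤ n →
      c * ((n : ℝ) * t1 ^ 2 + (n : ℝ) ^ 3 * t2 ^ 2)
        ≤ ∑ j ∈ Finset.Icc 1 n, (t1 + (j : ℝ) * t2) ^ 2 := by
  refine ⟨1/30, by norm_num, fun t1 t2 n hn => ?_⟩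
  rw [sum_sq_closed]
  have hn' : (2 : ℝ) ≤ n := by exact_mod_cast hn
  have h0 : (0 : ℝ) < n := by linarith
  nlinarith [sq_nonneg (58 * t1 + 30 * ((n : ℝ) + 1) * t2),
    sq_nonneg t2, sq_nonneg t1, mul_pos h0 h0,
    mul_nonneg (mul_nonneg h0.le h0.le) (sq_nonneg t2),
    mul_nonneg (sq_nonneg ((n:ℝ) - 2)) (sq_nonneg t2),
    mul_nonneg (mul_nonneg h0.le (sub_nonneg.2 hn')) (sq_nonneg t2)]
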